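/- Let G be a finite simple graph, C = (S,T) a maximum cut of G, F a subset of the edges inside S together with the edges inside T, and σ an orientation of F. Construct the directed multigraph network G_{C,F,σ}: take vertex set V(G) plus a source s and sink t; for each edge {u,v} of the cut E(S,T) insert arcs (u,v) and (v,u), each with capacity 1; for each edge {u,v} ∈ F oriented as (u,v) in σ, insert arcs (s,u) and (v,t), each with capacity 1 (not inserting (u,v) itself). Then G_{C,F,σ} admits an s-t-flow of value |F|. -/

import Mathlib

open Finset

/-- The number of (ordered, with the `S`-endpoint first) cut edges of the cut `(S, Sᶜ)`. -/
def cutSize {V : Type*} [Fintype V] [DecidableEq V] (G : SimpleGraph V) [DecidableRel G.Adj]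
    (S : Finset V) : ℕ :=
  (Finset.univ.filter (fun p : V × V => G.Adj p.1 p.2 ∧ p.1 ∈ S ∧ p.2 ∉ S)).card

set_option linter.unusedSectionVars false
set_option maxHeartbeats 1600000

section Aux
variable {V : Type*} [Fintype V] [DecidableEq V] (G : SimpleGraph V) [DecidableRel G.Adj]
  (S : Finset V)

/-- cut pair predicate -/
def Pc : V × V → Prop := fun e => G.Adj e.1 e.2 ∧ (e.1 ∈ S ↔ e.2 ∉ S)

instance : DecidablePred (Pc G S) := fun e => by unfold Pc; infer_instance

lemma Pc_swap {x y : V} (h : Pc G S (x, y)) : Pc G S (y, x) := by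
  obtain ⟨h1, h2⟩ := h
  exact ⟨h1.symm, by simp only at h2 ⊢; tauto⟩

/-- residual step -/
def StepR (fc : V × V → ℕ) : V → V → Prop := fun x y =>
  Pc G S (x, y) ∧ (fc (x, y) = 0 ∨ fc (y, x) = 1)

lemma sum_update_fst (f : V × V → ℕ) (a b : V) (k : ℕ) (w : V) :
    (∑ y, Function.update f (a, b) k (w, y)) + (if w = a then f (a, b) else 0)
      = (∑ y, f (w, y)) + (if w = a then k else 0) := by
  by_cases h : w = a
  · subst h
    have hcong : ∑ y ∈ univ.erase b, Function.update f (w, b) k (w, y)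
        = ∑ y ∈ univ.erase b, f (w, y) := by
      refine Finset.sum_congr rfl (fun y hy => ?_)
      have hyb : y ≠ b := (Finset.mem_erase.1 hy).1
      exact Function.update_of_ne (by simp [hyb]) _ _
    rw [← Finset.sum_erase_add _ _ (Finset.mem_univ b),
        ← Finset.sum_erase_add _ (fun y => f (w, y)) (Finset.mem_univ b),
        Function.update_self, hcong]
    simp only [if_true]; omega
  · have hcong : ∑ y, Function.update f (a, b) k (w, y) = ∑ y, f (w, y) := by
      refine Finset.sum_congr rfl (fun y _ => ?_)
      exact Function.update_of_ne (by simp [h]) _ _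
    simp [h, hcong]

lemma sum_update_snd (f : V × V → ℕ) (a b : V) (k : ℕ) (w : V) :
    (∑ y, Function.update f (a, b) k (y, w)) + (if w = b then f (a, b) else 0)
      = (∑ y, f (y, w)) + (if w = b then k else 0) := by
  by_cases h : w = b
  · subst h
    have hcong : ∑ y ∈ univ.erase a, Function.update f (a, w) k (y, w)
        = ∑ y ∈ univ.erase a, f (y, w) := by
      refine Finset.sum_congr rfl (fun y hy => ?_)
      have hya : y ≠ a := (Finset.mem_erase.1 hy).1
      exact Function.update_of_ne (by simp [hya]) _ _
    rw [← Finset.sum_erase_add _ _ (Finset.mem_univ a),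
        ← Finset.sum_erase_add _ (fun y => f (y, w)) (Finset.mem_univ a),
        Function.update_self, hcong]
    simp only [if_true]; omega
  · have hcong : ∑ y, Function.update f (a, b) k (y, w) = ∑ y, f (y, w) := by
      refine Finset.sum_congr rfl (fun y _ => ?_)
      exact Function.update_of_ne (by simp [h]) _ _
    simp [h, hcong]


lemma push_edge (fc : V × V → ℕ) (hb : ∀ e, fc e ≤ 1) (hs : ∀ e, ¬ Pc G S e → fc e = 0)
    {u x : V} (hstep : StepR G S fc u x) :
    ∃ fc0 : V × V → ℕ, (∀ e, fc0 e ≤ 1) ∧ (∀ e, ¬ Pc G S e → fc0 e = 0) ∧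
      (∀ e, e ≠ (u, x) → e ≠ (x, u) → fc0 e = fc e) ∧
      (∀ w, (∑ y, fc0 (w, y)) + (∑ y, fc (y, w)) + (if w = x then 1 else 0)
          = (∑ y, fc (w, y)) + (∑ y, fc0 (y, w)) + (if w = u then 1 else 0)) := by
  have hpc : Pc G S (u, x) := hstep.1
  by_cases h1 : fc (x, u) = 1
  · refine ⟨Function.update fc (x, u) 0, ?_, ?_, ?_, ?_⟩
    · intro e
      rcases eq_or_ne e (x, u) with rfl | hne
      · simp
      · rw [Function.update_of_ne hne]; exact hb e
    · intro e he
      rcases eq_or_ne e (x, u) with rfl | hne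
      · simp
      · rw [Function.update_of_ne hne]; exact hs e he
    · intro e _ hne; exact Function.update_of_ne hne _ _
    · intro w
      have e1 := sum_update_fst fc x u 0 w
      have e2 := sum_update_snd fc x u 0 w
      rw [h1] at e1 e2
      split_ifs at e1 e2 ⊢ <;> omega
  · have h0 : fc (u, x) = 0 := by rcases hstep.2 with h | h; exact h; exact absurd h h1
    refine ⟨Function.update fc (u, x) 1, ?_, ?_, ?_, ?_⟩
    · intro e
      rcases eq_or_ne e (u, x) with rfl | hne
      · simp
      · rw [Function.update_of_ne hne]; exact hb e
    · intro e he
      rcases eq_or_ne e (u, x) with rfl | hne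
      · exact absurd hpc he
      · rw [Function.update_of_ne hne]; exact hs e he
    · intro e hne _; exact Function.update_of_ne hne _ _
    · intro w
      have e1 := sum_update_fst fc u x 1 w
      have e2 := sum_update_snd fc u x 1 w
      rw [h0] at e1 e2
      split_ifs at e1 e2 ⊢ <;> omega

lemma chain_congr {R R' : V → V → Prop} :
    ∀ (l : List V) (a : V), (∀ p q, p ∈ a :: l → q ∈ a :: l → R p q → R' p q) →
      List.Chain R a l → List.Chain R' a l := by
  intro l
  induction l with
  | nil => intro a _ _; exact List.Chain.nil
  | cons b l ih =>
    intro a h hc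
    unfold List.Chain at hc ⊢; rw [List.isChain_cons_cons] at hc ⊢
    refine ⟨h a b (by simp) (by simp) hc.1, ih b (fun p q hp hq => h p q ?_ ?_) hc.2⟩
    · simp only [List.mem_cons] at hp ⊢; tauto
    · simp only [List.mem_cons] at hq ⊢; tauto

lemma push_chain : ∀ (n : ℕ) (fc : V × V → ℕ), (∀ e, fc e ≤ 1) → (∀ e, ¬ Pc G S e → fc e = 0) →
    ∀ (u : V) (l : List V), l.length ≤ n → List.Chain (StepR G S fc) u l →
    ∃ fc2 : V × V → ℕ, (∀ e, fc2 e ≤ 1) ∧ (∀ e, ¬ Pc G S e → fc2 e = 0) ∧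
      ∀ w, (∑ y, fc2 (w, y)) + (∑ y, fc (y, w))
            + (if w = (u :: l).getLast (List.cons_ne_nil u l) then 1 else 0)
          = (∑ y, fc (w, y)) + (∑ y, fc2 (y, w)) + (if w = u then 1 else 0) := by
  intro n
  induction n with
  | zero =>
    intro fc hb hs u l hlen hc
    have hl : l = [] := List.eq_nil_of_length_eq_zero (Nat.le_zero.1 hlen)
    subst hl
    exact ⟨fc, hb, hs, fun w => by simp; congr⟩
  | succ n ih =>
    intro fc hb hs u l hlen hc
    match l with
    | [] => exact ⟨fc, hb, hs, fun w => by simp; congr⟩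
    | x :: l' =>
      by_cases hu : u ∈ x :: l'
      · obtain ⟨s, t, hst⟩ := List.append_of_mem hu
        rw [hst] at hc hlen
        replace hc : True ∧ List.Chain (StepR G S fc) u t :=
          ⟨trivial, List.IsChain.right_of_append (l₁ := u :: s) hc⟩
        have hlt : t.length ≤ n := by
          simp only [List.length_append, List.length_cons] at hlen; omega
        have hlast : (u :: x :: l').getLast (List.cons_ne_nil _ _)
            = (u :: t).getLast (List.cons_ne_nil _ _) := by
          have h1 : u :: x :: l' = (u :: s) ++ (u :: t) := by rw [hst]; rfl
          rw [List.getLast_congr _ (by simp) h1]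
          · exact List.getLast_append_of_ne_nil _ (List.cons_ne_nil _ _)
        obtain ⟨fc2, h1, h2, h3⟩ := ih fc hb hs u t hlt hc.2
        exact ⟨fc2, h1, h2, fun w => by rw [hlast]; exact h3 w⟩
      · unfold List.Chain at hc; rw [List.isChain_cons_cons] at hc
        obtain ⟨fc0, hb0, hs0, hloc, heq0⟩ := push_edge G S fc hb hs hc.1
        have hchain0 : List.Chain (StepR G S fc0) x l' := by
          refine chain_congr l' x (fun p q hp hq hpq => ?_) hc.2
          have hpu : p ≠ u := fun h => hu (h ▸ hp)
          have hqu : q ≠ u := fun h => hu (h ▸ hq)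
          have h1 : fc0 (p, q) = fc (p, q) :=
            hloc _ (by simp [hpu]) (by simp [hqu])
          have h2 : fc0 (q, p) = fc (q, p) :=
            hloc _ (by simp [hqu]) (by simp [hpu])
          exact ⟨hpq.1, by rw [h1, h2]; exact hpq.2⟩
        obtain ⟨fc2, hb2, hs2, heq2⟩ := ih fc0 hb0 hs0 x l'
          (by simp only [List.length_cons] at hlen; omega) hchain0
        refine ⟨fc2, hb2, hs2, fun w => ?_⟩
        have e0 := heq0 w
        have e2 := heq2 w
        rw [List.getLast_cons_cons]
        split_ifs at e0 e2 ⊢ <;> omega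

lemma card_swap (q : V × V → Prop) [DecidablePred q] :
    (univ.filter q).card = (univ.filter (fun p : V × V => q (p.2, p.1))).card := by
  refine Finset.card_nbij' (fun p => (p.2, p.1)) (fun p => (p.2, p.1)) ?_ ?_ ?_ ?_ <;>
    simp [Set.MapsTo, Function.LeftInverse, Function.RightInverse, Set.LeftInvOn, Set.RightInvOn]

lemma fcard_congr {p q : V × V → Prop} [DecidablePred p] [DecidablePred q]
    (h : ∀ x, p x ↔ q x) : (univ.filter p).card = (univ.filter q).card := by
  congr 1
  exact Finset.filter_congr (fun x _ => h x)

lemma fcard_split (p q : V × V → Prop) [DecidablePred p] [DecidablePred q] :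
    (univ.filter p).card
      = (univ.filter (fun x => p x ∧ q x)).card
        + (univ.filter (fun x => p x ∧ ¬ q x)).card := by
  rw [← Finset.filter_filter, ← Finset.filter_filter,
    Finset.card_filter_add_card_filter_not]

lemma two_mul_cutSize (X : Finset V) :
    2 * cutSize G X
      = (univ.filter (fun p : V × V => G.Adj p.1 p.2 ∧ ((p.1 ∈ X) ↔ (p.2 ∉ X)))).card := by
  have hsplit := fcard_split (fun p : V × V => G.Adj p.1 p.2 ∧ ((p.1 ∈ X) ↔ (p.2 ∉ X)))
    (fun p => p.1 ∈ X)
  have h1 : (univ.filter (fun p : V × V =>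
      (G.Adj p.1 p.2 ∧ ((p.1 ∈ X) ↔ (p.2 ∉ X))) ∧ p.1 ∈ X)).card = cutSize G X := by
    apply fcard_congr; intro p; tauto
  have h2 : (univ.filter (fun p : V × V =>
      (G.Adj p.1 p.2 ∧ ((p.1 ∈ X) ↔ (p.2 ∉ X))) ∧ ¬ p.1 ∈ X)).card = cutSize G X := by
    unfold cutSize
    rw [card_swap (fun p : V × V => G.Adj p.1 p.2 ∧ p.1 ∈ X ∧ p.2 ∉ X)]
    apply fcard_congr; intro p
    have hadj : G.Adj p.2 p.1 ↔ G.Adj p.1 p.2 := G.adj_comm p.2 p.1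
    tauto
  unfold cutSize at h1 h2 ⊢
  omega

lemma key_ineq (hmax : ∀ S' : Finset V, cutSize G S' ≤ cutSize G S) (R : Finset V) :
    (univ.filter (fun p : V × V =>
        G.Adj p.1 p.2 ∧ (p.1 ∈ S ↔ p.2 ∈ S) ∧ p.1 ∈ R ∧ p.2 ∉ R)).card
      ≤ (univ.filter (fun p : V × V => Pc G S p ∧ p.1 ∈ R ∧ p.2 ∉ R)).card := by
  set S' := (S \ R) ∪ (R \ S) with hS'
  have hmem : ∀ x, x ∈ S' ↔ ((x ∈ S ∧ x ∉ R) ∨ (x ∈ R ∧ x ∉ S)) := by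
    intro x; simp [hS', Finset.mem_union, Finset.mem_sdiff]
  have hNS' : 2 * cutSize G S' = (univ.filter (fun p : V × V =>
      G.Adj p.1 p.2 ∧ ¬((p.1 ∈ S ↔ p.2 ∉ S) ↔ (p.1 ∈ R ↔ p.2 ∉ R)))).card := by
    rw [two_mul_cutSize]
    apply fcard_congr; intro p
    simp only [hmem]
    tauto
  have hNS := two_mul_cutSize G S
  have hle : (univ.filter (fun p : V × V =>
      G.Adj p.1 p.2 ∧ ¬((p.1 ∈ S ↔ p.2 ∉ S) ↔ (p.1 ∈ R ↔ p.2 ∉ R)))).card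
      ≤ (univ.filter (fun p : V × V => G.Adj p.1 p.2 ∧ ((p.1 ∈ S) ↔ (p.2 ∉ S)))).card := by
    rw [← hNS', ← hNS]
    exact Nat.mul_le_mul_left 2 (hmax S')
  have s1 := fcard_split (fun p : V × V =>
      G.Adj p.1 p.2 ∧ ¬((p.1 ∈ S ↔ p.2 ∉ S) ↔ (p.1 ∈ R ↔ p.2 ∉ R)))
    (fun p => p.1 ∈ R ↔ p.2 ∉ R)
  have s2 := fcard_split (fun p : V × V => G.Adj p.1 p.2 ∧ ((p.1 ∈ S) ↔ (p.2 ∉ S)))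
    (fun p => p.1 ∈ R ↔ p.2 ∉ R)
  -- identify the pieces
  have c1 : (univ.filter (fun p : V × V =>
      (G.Adj p.1 p.2 ∧ ¬((p.1 ∈ S ↔ p.2 ∉ S) ↔ (p.1 ∈ R ↔ p.2 ∉ R))) ∧ (p.1 ∈ R ↔ p.2 ∉ R))).card
      = (univ.filter (fun p : V × V =>
      G.Adj p.1 p.2 ∧ ¬(p.1 ∈ S ↔ p.2 ∉ S) ∧ (p.1 ∈ R ↔ p.2 ∉ R))).card := by
    apply fcard_congr; intro p; tauto
  have c2 : (univ.filter (fun p : V × V =>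
      (G.Adj p.1 p.2 ∧ ¬((p.1 ∈ S ↔ p.2 ∉ S) ↔ (p.1 ∈ R ↔ p.2 ∉ R))) ∧ ¬(p.1 ∈ R ↔ p.2 ∉ R))).card
      = (univ.filter (fun p : V × V =>
      (G.Adj p.1 p.2 ∧ ((p.1 ∈ S) ↔ (p.2 ∉ S))) ∧ ¬(p.1 ∈ R ↔ p.2 ∉ R))).card := by
    apply fcard_congr; intro p; tauto
  have hB1A1 : (univ.filter (fun p : V × V =>
      G.Adj p.1 p.2 ∧ ¬(p.1 ∈ S ↔ p.2 ∉ S) ∧ (p.1 ∈ R ↔ p.2 ∉ R))).card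
      ≤ (univ.filter (fun p : V × V =>
      (G.Adj p.1 p.2 ∧ ((p.1 ∈ S) ↔ (p.2 ∉ S))) ∧ (p.1 ∈ R ↔ p.2 ∉ R))).card := by
    omega
  -- B1 = 2 * wR
  have b1 := fcard_split (fun p : V × V =>
      G.Adj p.1 p.2 ∧ ¬(p.1 ∈ S ↔ p.2 ∉ S) ∧ (p.1 ∈ R ↔ p.2 ∉ R)) (fun p => p.1 ∈ R)
  have b2 : (univ.filter (fun p : V × V =>
      (G.Adj p.1 p.2 ∧ ¬(p.1 ∈ S ↔ p.2 ∉ S) ∧ (p.1 ∈ R ↔ p.2 ∉ R)) ∧ p.1 ∈ R)).card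
      = (univ.filter (fun p : V × V =>
      G.Adj p.1 p.2 ∧ (p.1 ∈ S ↔ p.2 ∈ S) ∧ p.1 ∈ R ∧ p.2 ∉ R)).card := by
    apply fcard_congr; intro p; tauto
  have b3 : (univ.filter (fun p : V × V =>
      (G.Adj p.1 p.2 ∧ ¬(p.1 ∈ S ↔ p.2 ∉ S) ∧ (p.1 ∈ R ↔ p.2 ∉ R)) ∧ ¬ p.1 ∈ R)).card
      = (univ.filter (fun p : V × V =>
      G.Adj p.1 p.2 ∧ (p.1 ∈ S ↔ p.2 ∈ S) ∧ p.1 ∈ R ∧ p.2 ∉ R)).card := by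
    rw [card_swap (fun p : V × V =>
      G.Adj p.1 p.2 ∧ (p.1 ∈ S ↔ p.2 ∈ S) ∧ p.1 ∈ R ∧ p.2 ∉ R)]
    apply fcard_congr; intro p
    have hadj : G.Adj p.2 p.1 ↔ G.Adj p.1 p.2 := G.adj_comm p.2 p.1
    tauto
  -- A1 = 2 * cR
  have a1 := fcard_split (fun p : V × V =>
      (G.Adj p.1 p.2 ∧ ((p.1 ∈ S) ↔ (p.2 ∉ S))) ∧ (p.1 ∈ R ↔ p.2 ∉ R)) (fun p => p.1 ∈ R)
  have a2 : (univ.filter (fun p : V × V =>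
      ((G.Adj p.1 p.2 ∧ ((p.1 ∈ S) ↔ (p.2 ∉ S))) ∧ (p.1 ∈ R ↔ p.2 ∉ R)) ∧ p.1 ∈ R)).card
      = (univ.filter (fun p : V × V => Pc G S p ∧ p.1 ∈ R ∧ p.2 ∉ R)).card := by
    apply fcard_congr; intro p
    unfold Pc
    tauto
  have a3 : (univ.filter (fun p : V × V =>
      ((G.Adj p.1 p.2 ∧ ((p.1 ∈ S) ↔ (p.2 ∉ S))) ∧ (p.1 ∈ R ↔ p.2 ∉ R)) ∧ ¬ p.1 ∈ R)).card
      = (univ.filter (fun p : V × V => Pc G S p ∧ p.1 ∈ R ∧ p.2 ∉ R)).card := by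
    rw [card_swap (fun p : V × V => Pc G S p ∧ p.1 ∈ R ∧ p.2 ∉ R)]
    apply fcard_congr; intro p
    have hpc : Pc G S (p.2, p.1) ↔ Pc G S p :=
      ⟨fun h => Pc_swap G S h, fun h => Pc_swap G S h⟩
    unfold Pc at hpc ⊢
    simp only at hpc ⊢
    tauto
  omega

lemma exists_fc (hmax : ∀ S' : Finset V, cutSize G S' ≤ cutSize G S) :
    ∀ A : Finset (V × V),
      (∀ e ∈ A, G.Adj e.1 e.2 ∧ ((e.1 ∈ S ∧ e.2 ∈ S) ∨ (e.1 ∉ S ∧ e.2 ∉ S))) →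
      ∃ fc : V × V → ℕ, (∀ e, fc e ≤ 1) ∧ (∀ e, ¬ Pc G S e → fc e = 0) ∧
        ∀ w, (A.filter (fun e => e.1 = w)).card + ∑ x, fc (x, w)
            = (A.filter (fun e => e.2 = w)).card + ∑ x, fc (w, x) := by
  intro A
  induction A using Finset.induction_on with
  | empty =>
    intro _
    exact ⟨fun _ => 0, by simp, by simp, fun w => by simp⟩
  | @insert e A' hnew ih =>
    intro hF
    obtain ⟨u, v⟩ := e
    obtain ⟨fc, hb, hs, hcons⟩ := ih (fun e he => hF e (Finset.mem_insert_of_mem he))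
    classical
    by_cases hreach : Relation.ReflTransGen (StepR G S fc) u v
    · -- augment along a path
      obtain ⟨l, hchain, hlast⟩ := List.exists_isChain_cons_of_relationReflTransGen hreach
      obtain ⟨fc2, hb2, hs2, heq⟩ := push_chain G S l.length fc hb hs u l le_rfl hchain
      refine ⟨fc2, hb2, hs2, fun w => ?_⟩
      have e1 := heq w
      rw [hlast] at e1
      have e2 := hcons w
      have hins1 : ((insert (u, v) A').filter (fun e => e.1 = w)).card
          = (A'.filter (fun e => e.1 = w)).card + (if w = u then 1 else 0) := by
        rw [Finset.filter_insert]
        by_cases h : w = u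
        · rw [if_pos h.symm, if_pos h,
            Finset.card_insert_of_notMem (fun hmem => hnew (Finset.mem_of_mem_filter _ hmem))]
        · rw [if_neg (fun h' => h h'.symm), if_neg h, add_zero]
      have hins2 : ((insert (u, v) A').filter (fun e => e.2 = w)).card
          = (A'.filter (fun e => e.2 = w)).card + (if w = v then 1 else 0) := by
        rw [Finset.filter_insert]
        by_cases h : w = v
        · rw [if_pos h.symm, if_pos h,
            Finset.card_insert_of_notMem (fun hmem => hnew (Finset.mem_of_mem_filter _ hmem))]
        · rw [if_neg (fun h' => h h'.symm), if_neg h, add_zero]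
      rw [hins1, hins2]
      split_ifs at e1 ⊢ <;> omega
    · -- contradiction with maximality of the cut
      exfalso
      set R : Finset V := univ.filter (fun x => Relation.ReflTransGen (StepR G S fc) u x)
        with hR
      have huR : u ∈ R := Finset.mem_filter.2 ⟨Finset.mem_univ _, Relation.ReflTransGen.refl⟩
      have hvR : v ∉ R := fun h => hreach (Finset.mem_filter.1 h).2
      have hnostep : ∀ w ∈ R, ∀ x, x ∉ R → ¬ StepR G S fc w x := fun w hw x hx hst =>
        hx (Finset.mem_filter.2 ⟨Finset.mem_univ _, ((Finset.mem_filter.1 hw).2).tail hst⟩)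
      have hfc0 : ∀ w ∈ R, ∀ x, x ∉ R → fc (x, w) = 0 := by
        intro w hw x hx
        by_cases hp : Pc G S (w, x)
        · have h1 := hnostep w hw x hx
          simp only [StepR, hp, true_and, not_or] at h1
          have := hb (x, w); omega
        · exact hs _ (fun h => hp (Pc_swap G S h))
      have hfc1 : ∀ w ∈ R, ∀ x, x ∉ R → fc (w, x) = (if Pc G S (w, x) then 1 else 0) := by
        intro w hw x hx
        by_cases hp : Pc G S (w, x)
        · have h1 := hnostep w hw x hx
          simp only [StepR, hp, true_and, not_or] at h1
          have := hb (w, x)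
          rw [if_pos hp]; omega
        · rw [if_neg hp]; exact hs _ hp
      -- sum the conservation law over R
      have hsum : (∑ w ∈ R, (A'.filter (fun e => e.1 = w)).card) + (∑ w ∈ R, ∑ x, fc (x, w))
          = (∑ w ∈ R, (A'.filter (fun e => e.2 = w)).card) + (∑ w ∈ R, ∑ x, fc (w, x)) := by
        rw [← Finset.sum_add_distrib, ← Finset.sum_add_distrib]
        exact Finset.sum_congr rfl (fun w _ => hcons w)
      have hsplitin : (∑ w ∈ R, ∑ x, fc (x, w))
          = (∑ w ∈ R, ∑ x ∈ R, fc (x, w)) + (∑ w ∈ R, ∑ x ∈ Rᶜ, fc (x, w)) := by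
        rw [← Finset.sum_add_distrib]
        exact Finset.sum_congr rfl (fun w _ => (Finset.sum_add_sum_compl R _).symm)
      have hsplitout : (∑ w ∈ R, ∑ x, fc (w, x))
          = (∑ w ∈ R, ∑ x ∈ R, fc (w, x)) + (∑ w ∈ R, ∑ x ∈ Rᶜ, fc (w, x)) := by
        rw [← Finset.sum_add_distrib]
        exact Finset.sum_congr rfl (fun w _ => (Finset.sum_add_sum_compl R _).symm)
      have hTin0 : (∑ w ∈ R, ∑ x ∈ Rᶜ, fc (x, w)) = 0 :=
        Finset.sum_eq_zero fun w hw => Finset.sum_eq_zero fun x hx =>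
          hfc0 w hw x (Finset.mem_compl.1 hx)
      have hcomm : (∑ w ∈ R, ∑ x ∈ R, fc (x, w)) = (∑ w ∈ R, ∑ x ∈ R, fc (w, x)) :=
        Finset.sum_comm
      have hTout : (∑ w ∈ R, ∑ x ∈ Rᶜ, fc (w, x))
          = (univ.filter (fun p : V × V => Pc G S p ∧ p.1 ∈ R ∧ p.2 ∉ R)).card := by
        rw [Finset.sum_congr rfl (fun w hw => Finset.sum_congr rfl (fun x hx =>
          hfc1 w hw x (Finset.mem_compl.1 hx)))]
        rw [← Finset.sum_product']
        rw [Finset.sum_boole]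
        norm_cast
        congr 1
        ext p
        simp only [Finset.mem_filter, Finset.mem_product, Finset.mem_compl, Finset.mem_univ,
          true_and]
        tauto
      -- fiberwise counting
      have hfib1 : (∑ w ∈ R, (A'.filter (fun e => e.1 = w)).card)
          = (A'.filter (fun e => e.1 ∈ R)).card := by
        rw [Finset.card_eq_sum_card_fiberwise
          (f := fun e : V × V => e.1) (s := A'.filter (fun e => e.1 ∈ R)) (t := R) (fun e he => (Finset.mem_filter.1 he).2)]
        refine Finset.sum_congr rfl fun w hw => ?_
        congr 1
        ext e
        simp only [Finset.mem_filter, and_assoc]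
        constructor
        · rintro ⟨h1, h3⟩; exact ⟨h1, by rw [h3]; exact hw, h3⟩
        · rintro ⟨h1, h2, h3⟩; exact ⟨h1, h3⟩
      have hfib2 : (∑ w ∈ R, (A'.filter (fun e => e.2 = w)).card)
          = (A'.filter (fun e => e.2 ∈ R)).card := by
        rw [Finset.card_eq_sum_card_fiberwise
          (f := fun e : V × V => e.2) (s := A'.filter (fun e => e.2 ∈ R)) (t := R) (fun e he => (Finset.mem_filter.1 he).2)]
        refine Finset.sum_congr rfl fun w hw => ?_
        congr 1
        ext e
        simp only [Finset.mem_filter, and_assoc]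
        constructor
        · rintro ⟨h1, h3⟩; exact ⟨h1, by rw [h3]; exact hw, h3⟩
        · rintro ⟨h1, h2, h3⟩; exact ⟨h1, h3⟩
      -- bookkeeping with the inserted edge
      have hA1 : ((insert (u, v) A').filter (fun e => e.1 ∈ R)).card
          = (A'.filter (fun e => e.1 ∈ R)).card + 1 := by
        rw [Finset.filter_insert, if_pos huR,
          Finset.card_insert_of_notMem (fun hmem => hnew (Finset.mem_of_mem_filter _ hmem))]
      have hA2 : ((insert (u, v) A').filter (fun e => e.2 ∈ R)).card
          = (A'.filter (fun e => e.2 ∈ R)).card := by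
        rw [Finset.filter_insert, if_neg hvR]
      -- split the A-counts by the second/first coordinate
      have t1 : ((insert (u, v) A').filter (fun e => e.1 ∈ R)).card
          = ((insert (u, v) A').filter (fun e => e.1 ∈ R ∧ e.2 ∈ R)).card
            + ((insert (u, v) A').filter (fun e => e.1 ∈ R ∧ e.2 ∉ R)).card := by
        rw [← Finset.filter_filter, ← Finset.filter_filter,
          Finset.card_filter_add_card_filter_not]
      have t2 : ((insert (u, v) A').filter (fun e => e.2 ∈ R)).card
          = ((insert (u, v) A').filter (fun e => e.2 ∈ R ∧ e.1 ∈ R)).card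
            + ((insert (u, v) A').filter (fun e => e.2 ∈ R ∧ e.1 ∉ R)).card := by
        rw [← Finset.filter_filter, ← Finset.filter_filter,
          Finset.card_filter_add_card_filter_not]
      have t3 : ((insert (u, v) A').filter (fun e => e.1 ∈ R ∧ e.2 ∈ R)).card
          = ((insert (u, v) A').filter (fun e => e.2 ∈ R ∧ e.1 ∈ R)).card := by
        congr 1
        exact Finset.filter_congr (fun e _ => and_comm)
      -- the crossing edges of A are within-side edges crossing R
      have hsub : (insert (u, v) A').filter (fun e => e.1 ∈ R ∧ e.2 ∉ R)
          ⊆ univ.filter (fun p : V × V =>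
              G.Adj p.1 p.2 ∧ (p.1 ∈ S ↔ p.2 ∈ S) ∧ p.1 ∈ R ∧ p.2 ∉ R) := by
        intro e he
        rw [Finset.mem_filter] at he ⊢
        obtain ⟨heA, h1, h2⟩ := he
        have h3 := hF e heA
        exact ⟨Finset.mem_univ _, h3.1, by tauto, h1, h2⟩
      have hwle := Finset.card_le_card hsub
      have hkey := key_ineq G S hmax R
      omega

end Aux

/-- given a maximum cut `C = (S, T)` of `G`, a set `F ⊆ E(S) ∪ E(T)` with an
orientation `σ` (encoded as the set `A` of oriented pairs), the auxiliary network `G_{C,F,σ}`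
(with a source arc `s → u` and a sink arc `v → t` for each `(u,v) ∈ A`, and arcs of capacity 1
in both directions for every cut edge) admits an `s`-`t`-flow of value `|F|`.  The flow is
encoded by `fs` (flows on the source arcs, indexed by the corresponding element of `A`),
`ft` (flows on the sink arcs), and `fc` (flows on the cut arcs). -/
theorem stmt3 {V : Type*} [Fintype V] [DecidableEq V] (G : SimpleGraph V) [DecidableRel G.Adj]
    (S : Finset V)
    (hmax : ∀ S' : Finset V, cutSize G S' ≤ cutSize G S)
    (A : Finset (V × V))
    (hF : ∀ e ∈ A, G.Adj e.1 e.2 ∧ ((e.1 ∈ S ∧ e.2 ∈ S) ∨ (e.1 ∉ S ∧ e.2 ∉ S)))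
    (hσ : ∀ e ∈ A, (e.2, e.1) ∉ A) :
    ∃ fs ft fc : V × V → ℕ,
      (∀ e, fs e ≤ 1) ∧ (∀ e, ft e ≤ 1) ∧ (∀ e, fc e ≤ 1) ∧
      (∀ e, e ∉ A → fs e = 0) ∧ (∀ e, e ∉ A → ft e = 0) ∧
      (∀ e : V × V, ¬(G.Adj e.1 e.2 ∧ (e.1 ∈ S ↔ e.2 ∉ S)) → fc e = 0) ∧
      (∀ v : V,
        (∑ e ∈ A.filter (fun e => e.1 = v), fs e) + (∑ u : V, fc (u, v)) =
        (∑ e ∈ A.filter (fun e => e.2 = v), ft e) + (∑ u : V, fc (v, u))) ∧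
      (∑ e ∈ A, fs e) = A.card := by

  obtain ⟨fc, hb, hsupp, hcons⟩ := exists_fc G S hmax A hF
  refine ⟨fun e => if e ∈ A then 1 else 0, fun e => if e ∈ A then 1 else 0, fc,
    ?_, ?_, hb, ?_, ?_, fun e he => hsupp e he, ?_, ?_⟩
  · intro e; simp only []; split <;> omega
  · intro e; simp only []; split <;> omega
  · intro e he; simp [he]
  · intro e he; simp [he]
  · intro v
    have h1 : (∑ e ∈ A.filter (fun e => e.1 = v), (if e ∈ A then (1 : ℕ) else 0))
        = (A.filter (fun e => e.1 = v)).card := by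
      rw [Finset.sum_congr rfl (fun e he => if_pos (Finset.mem_of_mem_filter _ he))]
      simp
    have h2 : (∑ e ∈ A.filter (fun e => e.2 = v), (if e ∈ A then (1 : ℕ) else 0))
        = (A.filter (fun e => e.2 = v)).card := by
      rw [Finset.sum_congr rfl (fun e he => if_pos (Finset.mem_of_mem_filter _ he))]
      simp
    rw [h1, h2]
    exact hcons v
  · rw [Finset.sum_congr rfl (fun e he => if_pos he)]
    simp
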